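/- Let (r_t) be a stationary solution of the asymmetric ARCH(1) equation r_t = ζ_t (c² + (a + b r_{t−1})²)^{1/2} with b² < 1, Eζ₀ = 0, Eζ₀² = 1, μ₃ := Eζ₀³ = 0, μ₄ := Eζ₀⁴ < ∞, μ₄ b⁴ < 1 and E r_t⁴ < ∞. Set m₂ := E r_0² and m₃(t) := E[r_t² r_0], m₄(t) := E[r_t² r_0²]. Then: m₂ = (a² + c²)/(1 − b²); m₃(t) = (2ab(a² + c²)/(1 − b²)) b^{2(t−1)} for all t ≥ 1; m₄(0) = μ₄((a²+c²)² + ((2ab)² + 2(a²+c²)b²) m₂)/(1 − μ₄ b⁴); m₄(t) = m₂(a²+c²)(1 − b^{2t})/(1 − b²) + b^{2t} m₄(0) for t ≥ 1; and Cov(r_t², r_0²) = (m₄(0) − m₂²) b^{2t} for all t ≥ 0. -/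

import Mathlib

open MeasureTheory ProbabilityTheory Filter
open scoped ENNReal

/-- σ-algebra `F_t = σ(ζ_s, s ≤ t)` generated by the noise up to time `t`. -/
def noiseFiltration {Ω : Type*} [MeasureSpace Ω] (ζ : ℤ → Ω → ℝ) (t : ℤ) :
    MeasurableSpace Ω :=
  ⨆ s : {s : ℤ // s ≤ t}, MeasurableSpace.comap (ζ s) inferInstance

/-- Strict stationarity of a process indexed by `ℤ`. -/
def StrictStationary {Ω : Type*} [MeasureSpace Ω] {α : Type*} [MeasurableSpace α]
    (Y : ℤ → Ω → α) : Prop :=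
  ∀ (t : ℤ) (n : ℕ) (s : Fin n → ℤ),
    IdentDistrib (fun ω i => Y (s i) ω) (fun ω i => Y (s i + t) ω)
      (ℙ : Measure Ω) (ℙ : Measure Ω)

/-- **Example 2 (moments of the asymmetric ARCH(1))**: for a stationary solution of
`r_t = ζ_t (c² + (a + b r_{t-1})²)^{1/2}` with `b² < 1`, `μ₃ = 0`, `μ₄ b⁴ < 1` and
`E r_t⁴ < ∞`, one has `m₂ = (a²+c²)/(1−b²)`,
`m₃(t) = E[r_t² r_0] = (2ab(a²+c²)/(1−b²)) b^{2(t−1)}` for `t ≥ 1`,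
`m₄(0) = μ₄((a²+c²)² + ((2ab)² + 2(a²+c²)b²)m₂)/(1 − μ₄b⁴)`,
`m₄(t) = m₂(a²+c²)(1−b^{2t})/(1−b²) + b^{2t} m₄(0)` for `t ≥ 1`, and
`Cov(r_t², r_0²) = (m₄(0) − m₂²) b^{2t}` for `t ≥ 0`. -/
theorem arch1_moments
    {Ω : Type*} [MeasureSpace Ω] [IsProbabilityMeasure (ℙ : Measure Ω)]
    (ζ : ℤ → Ω → ℝ) (hζmeas : ∀ t, Measurable (ζ t))
    (hindep : iIndepFun ζ (ℙ : Measure Ω))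
    (hident : ∀ t, IdentDistrib (ζ t) (ζ 0) (ℙ : Measure Ω) (ℙ : Measure Ω))
    (hμ4 : MemLp (ζ 0) 4 (ℙ : Measure Ω))
    (hmean : ∫ ω, ζ 0 ω ∂(ℙ : Measure Ω) = 0)
    (hvar : ∫ ω, (ζ 0 ω) ^ 2 ∂(ℙ : Measure Ω) = 1)
    (hskew : ∫ ω, (ζ 0 ω) ^ 3 ∂(ℙ : Measure Ω) = 0)
    (a b c : ℝ) (hb : b ^ 2 < 1)
    (hμ4b : (∫ ω, (ζ 0 ω) ^ 4 ∂(ℙ : Measure Ω)) * b ^ 4 < 1)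
    (r : ℤ → Ω → ℝ)
    (hadapted : ∀ t : ℤ, Measurable[noiseFiltration ζ t] (r t))
    (hrstat : StrictStationary r)
    (hr4 : ∀ t : ℤ, MemLp (r t) 4 (ℙ : Measure Ω))
    (heq : ∀ t : ℤ, r t =ᵐ[(ℙ : Measure Ω)]
      fun ω => ζ t ω * Real.sqrt (c ^ 2 + (a + b * r (t - 1) ω) ^ 2)) :
    (∫ ω, (r 0 ω) ^ 2 ∂(ℙ : Measure Ω)) = (a ^ 2 + c ^ 2) / (1 - b ^ 2) ∧
    (∀ t : ℕ, 1 ≤ t →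
      ∫ ω, (r (t : ℤ) ω) ^ 2 * r 0 ω ∂(ℙ : Measure Ω) =
        (2 * a * b * (a ^ 2 + c ^ 2) / (1 - b ^ 2)) * b ^ (2 * (t - 1))) ∧
    (∫ ω, (r 0 ω) ^ 4 ∂(ℙ : Measure Ω) =
      (∫ ω, (ζ 0 ω) ^ 4 ∂(ℙ : Measure Ω)) *
        ((a ^ 2 + c ^ 2) ^ 2 +
          ((2 * a * b) ^ 2 + 2 * (a ^ 2 + c ^ 2) * b ^ 2) *
            ∫ ω, (r 0 ω) ^ 2 ∂(ℙ : Measure Ω)) /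
        (1 - (∫ ω, (ζ 0 ω) ^ 4 ∂(ℙ : Measure Ω)) * b ^ 4)) ∧
    (∀ t : ℕ, 1 ≤ t →
      ∫ ω, (r (t : ℤ) ω) ^ 2 * (r 0 ω) ^ 2 ∂(ℙ : Measure Ω) =
        (∫ ω, (r 0 ω) ^ 2 ∂(ℙ : Measure Ω)) * (a ^ 2 + c ^ 2) * (1 - b ^ (2 * t)) /
            (1 - b ^ 2) +
          b ^ (2 * t) * ∫ ω, (r 0 ω) ^ 4 ∂(ℙ : Measure Ω)) ∧
    (∀ t : ℕ,
      (∫ ω, (r (t : ℤ) ω) ^ 2 * (r 0 ω) ^ 2 ∂(ℙ : Measure Ω)) -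
          (∫ ω, (r (t : ℤ) ω) ^ 2 ∂(ℙ : Measure Ω)) * ∫ ω, (r 0 ω) ^ 2 ∂(ℙ : Measure Ω) =
        ((∫ ω, (r 0 ω) ^ 4 ∂(ℙ : Measure Ω)) -
            (∫ ω, (r 0 ω) ^ 2 ∂(ℙ : Measure Ω)) ^ 2) * b ^ (2 * t)) := by
  -- basic measure-theory toolkit
  have hL2mul : ∀ {f g : Ω → ℝ}, MemLp f 2 (ℙ : Measure Ω) → MemLp g 2 (ℙ : Measure Ω) →
      Integrable (fun ω => f ω * g ω) (ℙ : Measure Ω) := by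
    intro f g hf hg
    have h := hg.smul (φ := f) hf (r := 1) (hpqr := ⟨by rw [inv_one]; exact ENNReal.inv_two_add_inv_two⟩)
    rw [memLp_one_iff_integrable] at h
    simpa [smul_eq_mul, Pi.mul_def] using h
  have hpow2 : ∀ {f : Ω → ℝ}, MemLp f 4 (ℙ : Measure Ω) →
      MemLp (fun ω => f ω ^ 2) 2 (ℙ : Measure Ω) := by
    intro f hf
    have h := hf.smul (φ := f) hf (p := 4) (q := 4) (r := 2) (hpqr := ⟨by
      rw [show (4:ℝ≥0∞) = 2*2 by norm_num, ENNReal.mul_inv (by simp) (by simp), ← mul_add,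
        ENNReal.inv_two_add_inv_two, mul_one]⟩)
    simpa [smul_eq_mul, pow_two, Pi.mul_def] using h
  -- σ-algebras
  have hFle : ∀ t : ℤ, noiseFiltration ζ t ≤ (inferInstance : MeasurableSpace Ω) := by
    intro t
    exact iSup_le fun s => (hζmeas s).comap_le
  have hFmono : ∀ {s t : ℤ}, s ≤ t → noiseFiltration ζ s ≤ noiseFiltration ζ t := by
    intro s t hst
    exact iSup_le fun u => le_iSup_of_le ⟨u.1, u.2.trans hst⟩ le_rfl
  have hrmeas : ∀ t, Measurable (r t) := fun t => (hadapted t).mono (hFle t) le_rfl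
  -- independence of ζ t from the past
  have indep_mono : ∀ {m₁ m₂ m₁' m₂' : MeasurableSpace Ω},
      Indep (_mΩ := MeasureSpace.toMeasurableSpace) m₁ m₂ ℙ → m₁' ≤ m₁ → m₂' ≤ m₂ →
      Indep (_mΩ := MeasureSpace.toMeasurableSpace) m₁' m₂' ℙ := by
    intro m₁ m₂ m₁' m₂' h h1 h2
    rw [ProbabilityTheory.Indep_iff] at h ⊢
    exact fun t1 t2 ht1 ht2 => h t1 t2 (h1 _ ht1) (h2 _ ht2)
  have hIndep : ∀ t : ℤ, Indep (MeasurableSpace.comap (ζ t) inferInstance)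
      (noiseFiltration ζ (t - 1)) (ℙ : Measure Ω) := by
    intro t
    have h := ProbabilityTheory.indep_iSup_of_disjoint
      (m := fun i : ℤ => MeasurableSpace.comap (ζ i) inferInstance)
      (fun i => (hζmeas i).comap_le) hindep.iIndep
      (S := {t}) (T := {s : ℤ | s ≤ t - 1})
      (by rw [Set.disjoint_singleton_left]; simp only [Set.mem_setOf_eq]; omega)
    refine indep_mono h ?_ ?_
    · exact le_biSup (fun i => MeasurableSpace.comap (ζ i) inferInstance) (Set.mem_singleton t)
    · exact iSup_le fun u => le_biSup (fun i => MeasurableSpace.comap (ζ i) inferInstance)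
        (show (u : ℤ) ∈ {s : ℤ | s ≤ t - 1} from u.2)
  have hIndepFun : ∀ (t : ℤ) (φ : ℝ → ℝ) (X : Ω → ℝ), Measurable φ →
      Measurable[noiseFiltration ζ (t - 1)] X →
      IndepFun (fun ω => φ (ζ t ω)) X (ℙ : Measure Ω) := by
    intro t φ X hφ hX
    rw [ProbabilityTheory.IndepFun_iff_Indep]
    refine indep_mono (hIndep t) ?_ hX.comap_le
    have hcc : MeasurableSpace.comap (fun ω => φ (ζ t ω))
          (inferInstance : MeasurableSpace ℝ) =
        MeasurableSpace.comap (ζ t) (MeasurableSpace.comap φ inferInstance) :=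
      MeasurableSpace.comap_comp.symm
    rw [hcc]
    exact MeasurableSpace.comap_mono hφ.comap_le
  -- factorization of integrals over the past
  have hfact : ∀ (t : ℤ) (φ : ℝ → ℝ) (X : Ω → ℝ), Measurable φ →
      Measurable[noiseFiltration ζ (t - 1)] X →
      Integrable (fun ω => φ (ζ t ω)) (ℙ : Measure Ω) → Integrable X (ℙ : Measure Ω) →
      (∫ ω, φ (ζ t ω) * X ω) = (∫ ω, φ (ζ t ω)) * ∫ ω, X ω := by
    intro t φ X hφ hX hint hXint
    exact (hIndepFun t φ X hφ hX).integral_mul_eq_mul_integral hint.aestronglyMeasurable hXint.aestronglyMeasurable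
  -- moments of the noise
  have hζ4 : ∀ t, MemLp (ζ t) 4 (ℙ : Measure Ω) := fun t => (hident t).symm.memLp_snd hμ4
  have hζ2 : ∀ t, MemLp (ζ t) 2 (ℙ : Measure Ω) :=
    fun t => (hζ4 t).mono_exponent (by norm_num)
  have hζsq2 : ∀ t, MemLp (fun ω => ζ t ω ^ 2) 2 (ℙ : Measure Ω) := fun t => hpow2 (hζ4 t)
  have hζint : ∀ (t : ℤ) (k : ℕ), k ≤ 4 → Integrable (fun ω => ζ t ω ^ k) (ℙ : Measure Ω) := by
    intro t k hk
    interval_cases k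
    · simpa using integrable_const (1 : ℝ)
    · simpa using (hζ2 t).integrable one_le_two
    · exact (hζ2 t).integrable_sq
    · exact (hL2mul (hζ2 t) (hζsq2 t)).congr (ae_of_all _ fun ω => by ring)
    · exact (hL2mul (hζsq2 t) (hζsq2 t)).congr (ae_of_all _ fun ω => by ring)
  have hζmom : ∀ (t : ℤ) (k : ℕ), ∫ ω, ζ t ω ^ k = ∫ ω, ζ 0 ω ^ k := by
    intro t k
    have h := ((hident t).comp (measurable_id.pow_const k)).integral_eq
    simpa [Function.comp] using h
  have hfactpow : ∀ (t : ℤ) (k : ℕ) (X : Ω → ℝ), k ≤ 4 →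
      Measurable[noiseFiltration ζ (t - 1)] X → Integrable X (ℙ : Measure Ω) →
      ∫ ω, ζ t ω ^ k * X ω = (∫ ω, ζ 0 ω ^ k) * ∫ ω, X ω := by
    intro t k X hk hX hXint
    have h := hfact t (fun x => x ^ k) X (measurable_id.pow_const k) hX (hζint t k hk) hXint
    rw [h, hζmom t k]
  -- stationarity, single marginal
  have hstat1 : ∀ t : ℤ, IdentDistrib (r t) (r 0) (ℙ : Measure Ω) (ℙ : Measure Ω) := by
    intro t
    have h := hrstat t 1 (fun _ => 0)
    have h0 := h.comp (measurable_pi_apply (0 : Fin 1))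
    simpa [Function.comp_def] using h0.symm
  have hrmom : ∀ (t : ℤ) (k : ℕ), ∫ ω, (r t ω) ^ k = ∫ ω, (r 0 ω) ^ k := by
    intro t k
    have h := ((hstat1 t).comp (measurable_id.pow_const k)).integral_eq
    simpa [Function.comp] using h
  -- integrability of the process
  have hr2 : ∀ t, MemLp (r t) 2 (ℙ : Measure Ω) :=
    fun t => (hr4 t).mono_exponent (by norm_num)
  have hrsq2 : ∀ t, MemLp (fun ω => (r t ω) ^ 2) 2 (ℙ : Measure Ω) := fun t => hpow2 (hr4 t)
  have hrint3 : ∀ t, Integrable (fun ω => (r t ω) ^ 3) (ℙ : Measure Ω) :=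
    fun t => (hL2mul (hr2 t) (hrsq2 t)).congr (ae_of_all _ fun ω => by ring)
  have hrint4 : ∀ t, Integrable (fun ω => (r t ω) ^ 4) (ℙ : Measure Ω) :=
    fun t => (hL2mul (hrsq2 t) (hrsq2 t)).congr (ae_of_all _ fun ω => by ring)
  -- the volatility K and its square root
  have hKnn : ∀ (t : ℤ) (ω : Ω), (0:ℝ) ≤ c ^ 2 + (a + b * r (t - 1) ω) ^ 2 :=
    fun t ω => by positivity
  have hKmeasF : ∀ t : ℤ, Measurable[noiseFiltration ζ (t - 1)]
      (fun ω => c ^ 2 + (a + b * r (t - 1) ω) ^ 2) := by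
    intro t
    exact measurable_const.add ((((hadapted (t - 1)).const_mul b).const_add a).pow_const 2)
  have hK2 : ∀ t : ℤ, MemLp (fun ω => c ^ 2 + (a + b * r (t - 1) ω) ^ 2) 2 (ℙ : Measure Ω) := by
    intro t
    have h1 : MemLp (fun ω => a + b * r (t - 1) ω) 4 (ℙ : Measure Ω) :=
      (memLp_const a).add ((hr4 (t - 1)).const_mul b)
    exact (memLp_const (c ^ 2)).add (hpow2 h1)
  have hsqrt_le : ∀ x : ℝ, 0 ≤ x → Real.sqrt x ≤ 1 + x := by
    intro x hx
    have h1 : Real.sqrt x ≤ Real.sqrt ((1 + x) ^ 2) := Real.sqrt_le_sqrt (by nlinarith)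
    rwa [Real.sqrt_sq (by linarith)] at h1
  have hsKmeasF : ∀ t : ℤ, Measurable[noiseFiltration ζ (t - 1)]
      (fun ω => Real.sqrt (c ^ 2 + (a + b * r (t - 1) ω) ^ 2)) :=
    fun t => Real.continuous_sqrt.measurable.comp (hKmeasF t)
  have hsK2 : ∀ t : ℤ,
      MemLp (fun ω => Real.sqrt (c ^ 2 + (a + b * r (t - 1) ω) ^ 2)) 2 (ℙ : Measure Ω) := by
    intro t
    refine MemLp.of_le ((memLp_const (1:ℝ)).add (hK2 t)) ?_ ?_
    · exact ((hsKmeasF t).mono (hFle (t - 1)) le_rfl).aestronglyMeasurable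
    · refine ae_of_all _ fun ω => ?_
      have h0 := hKnn t ω
      simp only [Pi.add_apply]
      rw [Real.norm_eq_abs, Real.norm_eq_abs, abs_of_nonneg (Real.sqrt_nonneg _),
        abs_of_nonneg (by positivity)]
      exact hsqrt_le _ h0
  -- key integral identities
  have keyA : ∀ (t : ℤ) (X : Ω → ℝ), Measurable[noiseFiltration ζ (t - 1)] X →
      MemLp X 2 (ℙ : Measure Ω) → ∫ ω, r t ω * X ω = 0 := by
    intro t X hX hX2
    have hae : (fun ω => r t ω * X ω) =ᵐ[(ℙ : Measure Ω)]
        (fun ω => ζ t ω ^ 1 *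
          (Real.sqrt (c ^ 2 + (a + b * r (t - 1) ω) ^ 2) * X ω)) := by
      filter_upwards [heq t] with ω hω
      rw [hω]; ring
    rw [integral_congr_ae hae,
      hfactpow t 1 (fun ω => Real.sqrt (c ^ 2 + (a + b * r (t - 1) ω) ^ 2) * X ω) (by norm_num) ((hsKmeasF t).mul hX) (hL2mul (hsK2 t) hX2)]
    simp [hmean]
  have keyB : ∀ (t : ℤ) (X : Ω → ℝ), Measurable[noiseFiltration ζ (t - 1)] X →
      MemLp X 2 (ℙ : Measure Ω) →
      ∫ ω, (r t ω) ^ 2 * X ω =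
        (a ^ 2 + c ^ 2) * (∫ ω, X ω) + (2 * a * b) * (∫ ω, r (t - 1) ω * X ω)
          + b ^ 2 * ∫ ω, (r (t - 1) ω) ^ 2 * X ω := by
    intro t X hX hX2
    have hae : (fun ω => (r t ω) ^ 2 * X ω) =ᵐ[(ℙ : Measure Ω)]
        (fun ω => ζ t ω ^ 2 * ((c ^ 2 + (a + b * r (t - 1) ω) ^ 2) * X ω)) := by
      filter_upwards [heq t] with ω hω
      rw [hω, mul_pow, Real.sq_sqrt (hKnn t ω)]; ring
    rw [integral_congr_ae hae,
      hfactpow t 2 (fun ω => (c ^ 2 + (a + b * r (t - 1) ω) ^ 2) * X ω) (by norm_num) ((hKmeasF t).mul hX) (hL2mul (hK2 t) hX2), hvar, one_mul]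
    have hsplit : (fun ω => (c ^ 2 + (a + b * r (t - 1) ω) ^ 2) * X ω) =
        fun ω => ((a ^ 2 + c ^ 2) * X ω + (2 * a * b) * (r (t - 1) ω * X ω))
          + b ^ 2 * ((r (t - 1) ω) ^ 2 * X ω) := by
      funext ω; ring
    have i1 : Integrable (fun ω => (a ^ 2 + c ^ 2) * X ω) (ℙ : Measure Ω) :=
      (hX2.integrable one_le_two).const_mul _
    have i2 : Integrable (fun ω => (2 * a * b) * (r (t - 1) ω * X ω)) (ℙ : Measure Ω) :=
      (hL2mul (hr2 (t - 1)) hX2).const_mul _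
    have i3 : Integrable (fun ω => b ^ 2 * ((r (t - 1) ω) ^ 2 * X ω)) (ℙ : Measure Ω) :=
      (hL2mul (hrsq2 (t - 1)) hX2).const_mul _
    have i12 : Integrable (fun ω => (a ^ 2 + c ^ 2) * X ω
        + (2 * a * b) * (r (t - 1) ω * X ω)) (ℙ : Measure Ω) := i1.add i2
    rw [hsplit, integral_add i12 i3, integral_add i1 i2,
      integral_const_mul, integral_const_mul, integral_const_mul]
  have keyC : ∀ t : ℤ, ∫ ω, (r t ω) ^ 3 = 0 := by
    intro t
    have hae : (fun ω => (r t ω) ^ 3) =ᵐ[(ℙ : Measure Ω)]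
        (fun ω => ζ t ω ^ 3 * ((c ^ 2 + (a + b * r (t - 1) ω) ^ 2) *
          Real.sqrt (c ^ 2 + (a + b * r (t - 1) ω) ^ 2))) := by
      filter_upwards [heq t] with ω hω
      rw [hω, mul_pow, show Real.sqrt (c ^ 2 + (a + b * r (t - 1) ω) ^ 2) ^ 3
          = Real.sqrt (c ^ 2 + (a + b * r (t - 1) ω) ^ 2) ^ 2
            * Real.sqrt (c ^ 2 + (a + b * r (t - 1) ω) ^ 2) from by ring,
        Real.sq_sqrt (hKnn t ω)]
    rw [integral_congr_ae hae,
      hfactpow t 3 (fun ω => (c ^ 2 + (a + b * r (t - 1) ω) ^ 2) *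
          Real.sqrt (c ^ 2 + (a + b * r (t - 1) ω) ^ 2)) (by norm_num) ((hKmeasF t).mul (hsKmeasF t)) (hL2mul (hK2 t) (hsK2 t)),
      hskew, zero_mul]
  have keyD : ∀ t : ℤ, ∫ ω, (r t ω) ^ 4
      = (∫ ω, ζ 0 ω ^ 4) * ∫ ω, (c ^ 2 + (a + b * r (t - 1) ω) ^ 2) ^ 2 := by
    intro t
    have hae : (fun ω => (r t ω) ^ 4) =ᵐ[(ℙ : Measure Ω)]
        (fun ω => ζ t ω ^ 4 * (c ^ 2 + (a + b * r (t - 1) ω) ^ 2) ^ 2) := by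
      filter_upwards [heq t] with ω hω
      rw [hω, mul_pow, show Real.sqrt (c ^ 2 + (a + b * r (t - 1) ω) ^ 2) ^ 4
          = (Real.sqrt (c ^ 2 + (a + b * r (t - 1) ω) ^ 2) ^ 2) ^ 2 from by ring,
        Real.sq_sqrt (hKnn t ω)]
    rw [integral_congr_ae hae,
      hfactpow t 4 _ le_rfl ((hKmeasF t).pow_const 2) ((hK2 t).integrable_sq)]
  have hEr : ∀ t : ℤ, ∫ ω, r t ω = 0 := by
    intro t
    have h := keyA t (fun _ => 1) measurable_const (memLp_const 1)
    simpa using h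
  -- second moment
  have hb1 : (1:ℝ) - b ^ 2 ≠ 0 := by nlinarith
  have hm2 : ∫ ω, (r 0 ω) ^ 2 = (a ^ 2 + c ^ 2) / (1 - b ^ 2) := by
    have h := keyB 0 (fun _ => 1) measurable_const (memLp_const 1)
    simp only [mul_one] at h
    rw [hEr (0 - 1), hrmom (0 - 1) 2] at h
    simp only [integral_const, measure_univ, probReal_univ, ENNReal.toReal_one, smul_eq_mul, one_mul,
      mul_zero, add_zero, mul_one] at h
    rw [eq_div_iff hb1]
    linear_combination h
    -- third-order moments m₃(t)
  have hG1 : ∫ ω, (r 1 ω) ^ 2 * r 0 ω = 2 * a * b * ∫ ω, (r 0 ω) ^ 2 := by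
    have hX : Measurable[noiseFiltration ζ ((1:ℤ) - 1)] (r 0) :=
      (hadapted 0).mono (hFmono (by norm_num)) le_rfl
    have h := keyB 1 (r 0) hX (hr2 0)
    rw [show (1:ℤ) - 1 = 0 from by norm_num] at h
    have e1 : ∫ ω, r 0 ω * r 0 ω = ∫ ω, (r 0 ω) ^ 2 :=
      integral_congr_ae (ae_of_all _ fun ω => by ring)
    have e2 : ∫ ω, (r 0 ω) ^ 2 * r 0 ω = 0 := by
      rw [show (fun ω => (r 0 ω) ^ 2 * r 0 ω) = fun ω => (r 0 ω) ^ 3 from funext fun ω => by ring]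
      exact keyC 0
    rw [e1, e2, hEr 0] at h
    rw [h]; ring
  have hGrec : ∀ t : ℤ, 2 ≤ t →
      ∫ ω, (r t ω) ^ 2 * r 0 ω = b ^ 2 * ∫ ω, (r (t - 1) ω) ^ 2 * r 0 ω := by
    intro t ht
    have hX : Measurable[noiseFiltration ζ (t - 1)] (r 0) :=
      (hadapted 0).mono (hFmono (by omega)) le_rfl
    have h := keyB t (r 0) hX (hr2 0)
    rw [hEr 0, keyA (t - 1) (r 0) ((hadapted 0).mono (hFmono (by omega)) le_rfl) (hr2 0)] at h
    rw [h]; ring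
  have hm3' : ∀ n : ℕ, ∫ ω, (r ((n:ℤ) + 1) ω) ^ 2 * r 0 ω
      = (2 * a * b * ∫ ω, (r 0 ω) ^ 2) * b ^ (2 * n) := by
    intro n
    induction n with
    | zero => simpa using hG1
    | succ n ih =>
      have h := hGrec ((n:ℤ) + 1 + 1) (by omega)
      rw [show (n:ℤ) + 1 + 1 - 1 = (n:ℤ) + 1 from by ring] at h
      have ecast : (((n+1:ℕ)):ℤ) + 1 = (n:ℤ) + 1 + 1 := by push_cast; ring
      rw [ecast, h, ih]; ring
  have hm3final : ∀ t : ℕ, 1 ≤ t → ∫ ω, (r (t:ℤ) ω) ^ 2 * r 0 ω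
      = (2 * a * b * (a ^ 2 + c ^ 2) / (1 - b ^ 2)) * b ^ (2 * (t - 1)) := by
    intro t ht
    obtain ⟨n, rfl⟩ : ∃ n, t = n + 1 := ⟨t - 1, by omega⟩
    have h := hm3' n
    rw [show (((n+1:ℕ)):ℤ) = (n:ℤ) + 1 from by push_cast; ring, h, hm2,
      show n + 1 - 1 = n from by omega]
    ring
  -- fourth moment at lag 0
  have hK2exp : ∫ ω, (c ^ 2 + (a + b * r ((0:ℤ) - 1) ω) ^ 2) ^ 2
      = (a ^ 2 + c ^ 2) ^ 2 + (4 * a ^ 2 * b ^ 2 + 2 * b ^ 2 * (a ^ 2 + c ^ 2))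
          * (∫ ω, (r 0 ω) ^ 2) + b ^ 4 * ∫ ω, (r 0 ω) ^ 4 := by
    have i1 : Integrable (fun _ : Ω => (a ^ 2 + c ^ 2) ^ 2) (ℙ : Measure Ω) := integrable_const _
    have i2 : Integrable (fun ω => (4 * a * b * (a ^ 2 + c ^ 2)) * r ((0:ℤ) - 1) ω)
        (ℙ : Measure Ω) := ((hr2 _).integrable one_le_two).const_mul _
    have i3 : Integrable (fun ω => (4 * a ^ 2 * b ^ 2 + 2 * b ^ 2 * (a ^ 2 + c ^ 2))
        * (r ((0:ℤ) - 1) ω) ^ 2) (ℙ : Measure Ω) := ((hr2 _).integrable_sq).const_mul _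
    have i4 : Integrable (fun ω => (4 * a * b ^ 3) * (r ((0:ℤ) - 1) ω) ^ 3) (ℙ : Measure Ω) :=
      (hrint3 _).const_mul _
    have i5 : Integrable (fun ω => b ^ 4 * (r ((0:ℤ) - 1) ω) ^ 4) (ℙ : Measure Ω) :=
      (hrint4 _).const_mul _
    have i12 : Integrable (fun ω => (a ^ 2 + c ^ 2) ^ 2
        + (4 * a * b * (a ^ 2 + c ^ 2)) * r ((0:ℤ) - 1) ω) (ℙ : Measure Ω) := i1.add i2
    have i123 : Integrable (fun ω => ((a ^ 2 + c ^ 2) ^ 2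
        + (4 * a * b * (a ^ 2 + c ^ 2)) * r ((0:ℤ) - 1) ω)
        + (4 * a ^ 2 * b ^ 2 + 2 * b ^ 2 * (a ^ 2 + c ^ 2)) * (r ((0:ℤ) - 1) ω) ^ 2)
        (ℙ : Measure Ω) := i12.add i3
    have i1234 : Integrable (fun ω => (((a ^ 2 + c ^ 2) ^ 2
        + (4 * a * b * (a ^ 2 + c ^ 2)) * r ((0:ℤ) - 1) ω)
        + (4 * a ^ 2 * b ^ 2 + 2 * b ^ 2 * (a ^ 2 + c ^ 2)) * (r ((0:ℤ) - 1) ω) ^ 2)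
        + (4 * a * b ^ 3) * (r ((0:ℤ) - 1) ω) ^ 3) (ℙ : Measure Ω) := i123.add i4
    have hsplit : (fun ω => (c ^ 2 + (a + b * r ((0:ℤ) - 1) ω) ^ 2) ^ 2) =
        fun ω => ((((a ^ 2 + c ^ 2) ^ 2
          + (4 * a * b * (a ^ 2 + c ^ 2)) * r ((0:ℤ) - 1) ω)
          + (4 * a ^ 2 * b ^ 2 + 2 * b ^ 2 * (a ^ 2 + c ^ 2)) * (r ((0:ℤ) - 1) ω) ^ 2)
          + (4 * a * b ^ 3) * (r ((0:ℤ) - 1) ω) ^ 3)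
          + b ^ 4 * (r ((0:ℤ) - 1) ω) ^ 4 := by
      funext ω; ring
    rw [hsplit, integral_add i1234 i5, integral_add i123 i4, integral_add i12 i3,
      integral_add i1 i2, integral_const_mul, integral_const_mul, integral_const_mul,
      integral_const_mul, hEr ((0:ℤ) - 1), keyC ((0:ℤ) - 1), hrmom ((0:ℤ) - 1) 2,
      hrmom ((0:ℤ) - 1) 4, integral_const]
    simp only [measure_univ, probReal_univ, ENNReal.toReal_one, smul_eq_mul, one_mul, mul_zero, add_zero]
  have hμ4ne : (1:ℝ) - (∫ ω, ζ 0 ω ^ 4) * b ^ 4 ≠ 0 := by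
    have := hμ4b; linarith
  have hm40 : ∫ ω, (r 0 ω) ^ 4 =
      (∫ ω, ζ 0 ω ^ 4) * ((a ^ 2 + c ^ 2) ^ 2
        + ((2 * a * b) ^ 2 + 2 * (a ^ 2 + c ^ 2) * b ^ 2) * ∫ ω, (r 0 ω) ^ 2)
      / (1 - (∫ ω, ζ 0 ω ^ 4) * b ^ 4) := by
    have h := keyD 0
    rw [hK2exp] at h
    rw [eq_div_iff hμ4ne]
    linear_combination h
  -- fourth-order moments m₄(t)
  have hHrec : ∀ t : ℤ, 1 ≤ t → ∫ ω, (r t ω) ^ 2 * (r 0 ω) ^ 2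
      = (a ^ 2 + c ^ 2) * (∫ ω, (r 0 ω) ^ 2)
        + b ^ 2 * ∫ ω, (r (t - 1) ω) ^ 2 * (r 0 ω) ^ 2 := by
    intro t ht
    have hX : Measurable[noiseFiltration ζ (t - 1)] (fun ω => (r 0 ω) ^ 2) :=
      ((hadapted 0).mono (hFmono (by omega)) le_rfl).pow_const 2
    have h := keyB t _ hX (hrsq2 0)
    have hmid : ∫ ω, r (t - 1) ω * (r 0 ω) ^ 2 = 0 := by
      rcases eq_or_lt_of_le ht with h1 | h1
      · rw [show t - 1 = 0 from by omega]
        rw [show (fun ω => r 0 ω * (r 0 ω) ^ 2) = fun ω => (r 0 ω) ^ 3 from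
          funext fun ω => by ring]
        exact keyC 0
      · exact keyA (t - 1) _ (((hadapted 0).mono (hFmono (by omega)) le_rfl).pow_const 2)
          (hrsq2 0)
    rw [h, hmid]; ring
  have hm4' : ∀ n : ℕ, ∫ ω, (r ((n:ℤ) + 1) ω) ^ 2 * (r 0 ω) ^ 2
      = (∫ ω, (r 0 ω) ^ 2) * (a ^ 2 + c ^ 2) * (1 - b ^ (2 * (n + 1))) / (1 - b ^ 2)
        + b ^ (2 * (n + 1)) * ∫ ω, (r 0 ω) ^ 4 := by
    intro n
    induction n with
    | zero =>
      have h := hHrec 1 le_rfl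
      rw [show (1:ℤ) - 1 = 0 from by norm_num] at h
      have e0 : ∫ ω, (r 0 ω) ^ 2 * (r 0 ω) ^ 2 = ∫ ω, (r 0 ω) ^ 4 := by
        rw [show (fun ω => (r 0 ω) ^ 2 * (r 0 ω) ^ 2) = fun ω => (r 0 ω) ^ 4 from
          funext fun ω => by ring]
      rw [e0] at h
      rw [show ((0:ℕ):ℤ) + 1 = 1 from by norm_num, h]
      field_simp
      ring
    | succ n ih =>
      have h := hHrec ((n:ℤ) + 1 + 1) (by omega)
      rw [show (n:ℤ) + 1 + 1 - 1 = (n:ℤ) + 1 from by ring] at h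
      rw [show (((n+1:ℕ)):ℤ) + 1 = (n:ℤ) + 1 + 1 from by push_cast; ring, h, ih]
      field_simp
      ring
  have hm4final : ∀ t : ℕ, 1 ≤ t → ∫ ω, (r (t:ℤ) ω) ^ 2 * (r 0 ω) ^ 2
      = (∫ ω, (r 0 ω) ^ 2) * (a ^ 2 + c ^ 2) * (1 - b ^ (2 * t)) / (1 - b ^ 2)
        + b ^ (2 * t) * ∫ ω, (r 0 ω) ^ 4 := by
    intro t ht
    obtain ⟨n, rfl⟩ : ∃ n, t = n + 1 := ⟨t - 1, by omega⟩
    have h := hm4' n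
    rw [show (((n+1:ℕ)):ℤ) = (n:ℤ) + 1 from by push_cast; ring]
    exact h
  -- covariances
  have hcov : ∀ t : ℕ,
      (∫ ω, (r (t:ℤ) ω) ^ 2 * (r 0 ω) ^ 2)
        - (∫ ω, (r (t:ℤ) ω) ^ 2) * ∫ ω, (r 0 ω) ^ 2
      = ((∫ ω, (r 0 ω) ^ 4) - (∫ ω, (r 0 ω) ^ 2) ^ 2) * b ^ (2 * t) := by
    intro t
    rw [hrmom (t:ℤ) 2]
    rcases Nat.eq_zero_or_pos t with h0 | h1
    · subst h0
      rw [show (((0:ℕ)):ℤ) = 0 from by norm_num,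
        show (fun ω => (r 0 ω) ^ 2 * (r 0 ω) ^ 2) = fun ω => (r 0 ω) ^ 4 from
          funext fun ω => by ring]
      simp
      ring
    · rw [hm4final t h1]
      have expand : (∫ ω, (r 0 ω) ^ 2) * (a ^ 2 + c ^ 2) * (1 - b ^ (2 * t)) / (1 - b ^ 2)
          = (∫ ω, (r 0 ω) ^ 2) ^ 2 * (1 - b ^ (2 * t)) := by
        rw [hm2]
        field_simp
      rw [expand]
      ring
  exact ⟨hm2, hm3final, hm40, hm4final, hcov⟩
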